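/- arXiv:2210.10210 — 2 statements merged into one kernel-verified Lean document; each statement's English description precedes it below -/
import Mathlib

section
/- Let d ∈ {1,2,3}, let ν ≥ 1/2, let 0 < ℓ ≤ (log 2)^{-1}√(ν/(2d)), let 0 < h ≤ (1 + √(8ν)ℓ)^{-1}, and let ε > 0. If m ∈ ℕ satisfies m ≥ (d·5^{d−1}/(π^{d/2} ε))^{1/(2ν)} · 1.6 √ν / (π h ℓ), then the Matérn truncation error satisfies | h^d Σ_{j ∈ ℤ^d, j ∉ J_m} Ĉ_{ν,ℓ}(jh) e^{2πih⟨j,x⟩} | ≤ ε/2 for all x ∈ ℝ^d. -/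
set_option maxHeartbeats 2000000

open Real Finset

/-- The Matérn spectral density
`Ĉ_{ν,ℓ}(ξ) = ĉ_{d,ν} (ℓ/√(2ν))^d (2ν + |2πℓξ|²)^{−ν−d/2}` with
`ĉ_{d,ν} = 2^d π^{d/2} (2ν)^ν Γ(ν+d/2)/Γ(ν)`. -/
noncomputable def Chat (d : ℕ) (ν ℓ : ℝ) (ξ : EuclideanSpace ℝ (Fin d)) : ℝ :=
  (2 ^ d * Real.pi ^ ((d : ℝ) / 2) * (2 * ν) ^ ν *
      Real.Gamma (ν + (d : ℝ) / 2) / Real.Gamma ν) *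
    (ℓ / Real.sqrt (2 * ν)) ^ d *
      (2 * ν + (2 * Real.pi * ℓ) ^ 2 * ‖ξ‖ ^ 2) ^ (-(ν + (d : ℝ) / 2))

/-- The lattice point `c·n ∈ ℝ^d` for `n ∈ ℤ^d` and a scalar `c`. -/
noncomputable def lpt (d : ℕ) (c : ℝ) (n : Fin d → ℤ) : EuclideanSpace ℝ (Fin d) :=
  (EuclideanSpace.equiv (Fin d) ℝ).symm (fun i => c * (n i : ℝ))

/-- The cube `J_m = {−m,…,m}^d ⊂ ℤ^d`. -/
noncomputable def Jm (d m : ℕ) : Finset (Fin d → ℤ) := Finset.Icc (fun _ => -(m : ℤ)) (fun _ => (m : ℤ))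

/-- Sup norm of a lattice point. -/
def Ksup (d : ℕ) (j : Fin d → ℤ) : ℕ := Finset.univ.sup fun i => (j i).natAbs

lemma mem_Jm_iff {d m : ℕ} {j : Fin d → ℤ} : j ∈ Jm d m ↔ Ksup d j ≤ m := by
  simp only [Jm, Finset.mem_Icc, Ksup, Finset.sup_le_iff, Finset.mem_univ, true_implies, Pi.le_def]
  constructor
  · rintro ⟨h1, h2⟩ i
    have := h1 i; have := h2 i; omega
  · intro H
    exact ⟨fun i => by have := H i; omega, fun i => by have := H i; omega⟩

lemma card_Jm (d m : ℕ) : (Jm d m).card = (2*m+1)^d := by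
  rw [Jm, Pi.card_Icc]
  have h1 : (Finset.Icc (-(m:ℤ)) (m:ℤ)).card = 2*m+1 := by
    rw [Int.card_Icc]; omega
  simp only [h1, Finset.prod_const, Finset.card_univ, Fintype.card_fin]

lemma Jm_subset (d : ℕ) {m N : ℕ} (h : m ≤ N) : Jm d m ⊆ Jm d N :=
  fun _ hj => mem_Jm_iff.2 (le_trans (mem_Jm_iff.1 hj) h)

lemma card_shell_le {d : ℕ} (hd : d = 1 ∨ d = 2 ∨ d = 3) (N : ℕ) :
    (2*(N+1)+1)^d ≤ (2*N+1)^d + 2*d*3^(d-1)*(N+1)^(d-1) := by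
  rcases hd with rfl | rfl | rfl
  · simp; omega
  · ring_nf
    nlinarith [N.zero_le]
  · ring_nf
    nlinarith [N.zero_le, sq_nonneg N]

lemma rpow_half_pow {x s : ℝ} (hx : 0 ≤ x) (hs : Real.sqrt x = s) (k : ℕ) :
    x ^ ((k:ℝ)/2) = s^k := by
  subst hs
  rw [Real.sqrt_eq_rpow, ← Real.rpow_natCast (x ^ ((1:ℝ)/2)) k, ← Real.rpow_mul hx]
  congr 1
  ring

lemma A_prod {ν : ℝ} (hν0 : (0:ℝ) < ν) :
    (2*ν)^ν * ν^(-ν) * (3.2:ℝ)^(-(2*ν)) = ((25/128:ℝ))^ν := by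
  have ha1 : (3.2:ℝ)^(-(2*ν)) = ((25/256:ℝ))^ν := by
    rw [show -(2*ν) = (-2)*ν by ring, Real.rpow_mul (by norm_num : (0:ℝ) ≤ 3.2)]
    congr 1
    rw [show (-2:ℝ) = -((2:ℕ):ℝ) by norm_num, Real.rpow_neg (by norm_num), Real.rpow_natCast]
    norm_num
  have ha2 : ν^ν * ν^(-ν) = 1 := by
    rw [← Real.rpow_add hν0]; simp
  rw [Real.mul_rpow (by norm_num) hν0.le, ha1,
    show (25/128:ℝ) = 2*(25/256) by norm_num, Real.mul_rpow (by norm_num) (by norm_num)]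
  calc (2:ℝ)^ν * ν^ν * ν^(-ν) * (25/256:ℝ)^ν
      = (2:ℝ)^ν * (25/256:ℝ)^ν * (ν^ν * ν^(-ν)) := by ring
    _ = (2:ℝ)^ν * (25/256:ℝ)^ν := by rw [ha2, mul_one]

lemma A_le {ν : ℝ} (hν : 1/2 ≤ ν) : ((25/128:ℝ))^ν ≤ 0.4421 := by
  have h1 : ((25/128:ℝ))^ν ≤ ((25/128:ℝ))^((1:ℝ)/2) :=
    Real.rpow_le_rpow_of_exponent_ge (by norm_num) (by norm_num) (by linarith)
  have h2 : ((25/128:ℝ))^((1:ℝ)/2) = Real.sqrt (25/128) := by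
    rw [Real.sqrt_eq_rpow]
  have h3 : Real.sqrt (25/128) ≤ 0.4421 := by
    rw [show (0.4421:ℝ) = Real.sqrt (0.4421^2) by rw [Real.sqrt_sq (by norm_num)]]
    exact Real.sqrt_le_sqrt (by norm_num)
  rw [← h2] at h3
  linarith

lemma gamma_key {ν : ℝ} (hν : 1/2 ≤ ν) :
    Real.sqrt Real.pi * Real.Gamma (ν + 1/2) ≤ 2 * (ν * Real.Gamma ν) := by
  have hν0 : (0:ℝ) < ν := by linarith
  set l : ℝ := 1/(2*ν) with hl
  have hl0 : 0 ≤ l := by positivity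
  have hl1 : l ≤ 1 := by
    rw [hl, div_le_one (by linarith)]; linarith
  have h1m : (0:ℝ) ≤ 1 - l := by linarith
  have hmem1 : (1:ℝ) ∈ Set.Ioi (0:ℝ) := by norm_num
  have hmem2 : ν + 1 ∈ Set.Ioi (0:ℝ) := by simp; linarith
  have hcx := Real.convexOn_log_Gamma.2
  have i1 := hcx hmem1 hmem2 hl0 h1m (by ring)
  have i2 := hcx hmem1 hmem2 h1m hl0 (by ring)
  simp only [smul_eq_mul, Function.comp_apply] at i1 i2
  rw [show l * 1 + (1 - l) * (ν + 1) = ν + 1/2 by rw [hl]; field_simp; ring] at i1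
  rw [show (1 - l) * 1 + l * (ν + 1) = 3/2 by rw [hl]; field_simp; ring] at i2
  rw [Real.Gamma_one, Real.log_one] at i1 i2
  have hsum : Real.log (Real.Gamma (ν + 1/2)) + Real.log (Real.Gamma (3/2))
      ≤ Real.log (Real.Gamma (ν + 1)) := by linarith
  have hg1 : 0 < Real.Gamma (ν + 1/2) := Real.Gamma_pos_of_pos (by linarith)
  have hg2 : 0 < Real.Gamma (3/2) := Real.Gamma_pos_of_pos (by norm_num)
  have hg3 : 0 < Real.Gamma (ν + 1) := Real.Gamma_pos_of_pos (by linarith)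
  rw [← Real.log_mul hg1.ne' hg2.ne'] at hsum
  have hmul : Real.Gamma (ν + 1/2) * Real.Gamma (3/2) ≤ Real.Gamma (ν + 1) :=
    (Real.log_le_log_iff (by positivity) hg3).1 hsum
  have h32 : Real.Gamma (3/2) = Real.sqrt Real.pi / 2 := by
    rw [show (3/2 : ℝ) = 1/2 + 1 by norm_num, Real.Gamma_add_one (by norm_num),
      Real.Gamma_one_half_eq]
    ring
  have hnu1 : Real.Gamma (ν + 1) = ν * Real.Gamma ν := Real.Gamma_add_one hν0.ne'
  rw [h32, hnu1] at hmul
  nlinarith [hmul]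

lemma tele_term {ν : ℝ} (hν : 1/2 ≤ ν) {k : ℕ} (hk : 1 ≤ k) :
    2*ν * (((k:ℝ)+1))^(-(2*ν+1)) ≤ (k:ℝ)^(-(2*ν)) - ((k:ℝ)+1)^(-(2*ν)) := by
  have hν0 : (0:ℝ) < ν := by linarith
  have hA1 : (1:ℝ) ≤ (k:ℝ) := by exact_mod_cast hk
  have hA0 : (0:ℝ) < (k:ℝ) := by linarith
  have hB0 : (0:ℝ) < (k:ℝ)+1 := by linarith
  set P : ℝ := ((k:ℝ)+1)^(-(2*ν)) with hP
  have hPpos : 0 < P := Real.rpow_pos_of_pos hB0 _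
  have hbern : 1 + (2*ν) * (1/(k:ℝ)) ≤ (1 + 1/(k:ℝ))^(2*ν) :=
    one_add_mul_self_le_rpow_one_add (by have := one_div_pos.mpr hA0; linarith) (by linarith)
  have hid : P * (1 + 1/(k:ℝ))^(2*ν) = (k:ℝ)^(-(2*ν)) := by
    rw [show (1 + 1/(k:ℝ)) = ((k:ℝ)+1)/(k:ℝ) by field_simp]
    rw [Real.div_rpow hB0.le hA0.le, hP, Real.rpow_neg hB0.le, Real.rpow_neg hA0.le]
    have e1 : ((k:ℝ)+1)^(2*ν) ≠ 0 := (Real.rpow_pos_of_pos hB0 _).ne'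
    have e2 : ((k:ℝ))^(2*ν) ≠ 0 := (Real.rpow_pos_of_pos hA0 _).ne'
    field_simp
  have h3 : ((k:ℝ)+1)^(-(2*ν+1)) = P * ((k:ℝ)+1)⁻¹ := by
    rw [show -(2*ν+1) = -(2*ν) + (-1) by ring, Real.rpow_add hB0, Real.rpow_neg_one]
  have hinv : ((k:ℝ)+1)⁻¹ ≤ 1/(k:ℝ) := by
    rw [← one_div]
    exact one_div_le_one_div_of_le hA0 (by linarith)
  calc 2*ν * (((k:ℝ)+1))^(-(2*ν+1)) = P * (2*ν * ((k:ℝ)+1)⁻¹) := by rw [h3]; ring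
    _ ≤ P * (2*ν * (1/(k:ℝ))) := by
        have h4 : 2*ν * ((k:ℝ)+1)⁻¹ ≤ 2*ν * (1/(k:ℝ)) :=
          mul_le_mul_of_nonneg_left hinv (by linarith)
        exact mul_le_mul_of_nonneg_left h4 hPpos.le
    _ ≤ P * ((1 + 1/(k:ℝ))^(2*ν) - 1) :=
        mul_le_mul_of_nonneg_left (by linarith) hPpos.le
    _ = P * (1 + 1/(k:ℝ))^(2*ν) - P := by ring
    _ = (k:ℝ)^(-(2*ν)) - ((k:ℝ)+1)^(-(2*ν)) := by rw [hid]

lemma tail_le {d : ℕ} (hd : d = 1 ∨ d = 2 ∨ d = 3) {ν : ℝ} (hν : 1/2 ≤ ν) {m : ℕ} (hm1 : 1 ≤ m) :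
    ∀ N, m ≤ N →
      ∑ j ∈ Jm d N \ Jm d m, ((Ksup d j : ℝ)) ^ (-(2*ν+(d:ℝ))) ≤
        (2*(d:ℝ)*3^(d-1)) / (2*ν) * ((m:ℝ)^(-(2*ν)) - (N:ℝ)^(-(2*ν))) := by
  have hd1 : 1 ≤ d := by rcases hd with rfl|rfl|rfl <;> norm_num
  have hν0 : (0:ℝ) < ν := by linarith
  refine Nat.le_induction ?_ ?_
  · rw [Finset.sdiff_self]
    simp
  · intro n hmn IH
    have hn1 : 1 ≤ n := le_trans hm1 hmn
    have hn0 : (0:ℝ) < (n:ℝ) := by exact_mod_cast hn1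
    have hn10 : (0:ℝ) < (n:ℝ)+1 := by linarith
    have hsub1 : Jm d m ⊆ Jm d n := Jm_subset d hmn
    have hsub2 : Jm d n ⊆ Jm d (n+1) := Jm_subset d (by omega)
    set w : (Fin d → ℤ) → ℝ := fun j => ((Ksup d j : ℝ)) ^ (-(2*ν+(d:ℝ))) with hw
    have key : ∑ j ∈ Jm d (n+1) \ Jm d m, w j
        = (∑ j ∈ Jm d n \ Jm d m, w j) + ∑ j ∈ Jm d (n+1) \ Jm d n, w j := by
      rw [Finset.sum_sdiff_eq_sub (hsub1.trans hsub2), Finset.sum_sdiff_eq_sub hsub1,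
        Finset.sum_sdiff_eq_sub hsub2]
      ring
    have hshell : ∑ j ∈ Jm d (n+1) \ Jm d n, w j
        = (((2*(n+1)+1)^d - (2*n+1)^d : ℕ) : ℝ) * (((n:ℝ)+1)) ^ (-(2*ν+(d:ℝ))) := by
      rw [Finset.sum_congr rfl (fun j hj => ?_), Finset.sum_const, Finset.card_sdiff_of_subset hsub2,
        card_Jm, card_Jm, nsmul_eq_mul]
      have h1 : Ksup d j ≤ n+1 := mem_Jm_iff.1 (Finset.mem_sdiff.1 hj).1
      have h2 : ¬ Ksup d j ≤ n := fun hc => (Finset.mem_sdiff.1 hj).2 (mem_Jm_iff.2 hc)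
      have h3 : Ksup d j = n+1 := by omega
      rw [hw]
      simp only [h3]
      push_cast
      ring_nf
    have hcard : (((2*(n+1)+1)^d - (2*n+1)^d : ℕ) : ℝ) ≤ 2*(d:ℝ)*3^(d-1)*((n:ℝ)+1)^(d-1) := by
      have hc1 : (2*(n+1)+1)^d - (2*n+1)^d ≤ 2*d*3^(d-1)*(n+1)^(d-1) :=
        Nat.sub_le_iff_le_add.mpr (by have := card_shell_le hd n; omega)
      calc (((2*(n+1)+1)^d - (2*n+1)^d : ℕ) : ℝ) ≤ ((2*d*3^(d-1)*(n+1)^(d-1) : ℕ) : ℝ) := by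
            exact_mod_cast hc1
        _ = 2*(d:ℝ)*3^(d-1)*((n:ℝ)+1)^(d-1) := by push_cast; ring
    have hmerge : ((n:ℝ)+1)^(d-1) * (((n:ℝ)+1)) ^ (-(2*ν+(d:ℝ))) = ((n:ℝ)+1) ^ (-(2*ν+1)) := by
      rw [← Real.rpow_natCast ((n:ℝ)+1) (d-1), ← Real.rpow_add hn10]
      congr 1
      rw [Nat.cast_sub hd1]
      push_cast
      ring
    have hshell_le : ∑ j ∈ Jm d (n+1) \ Jm d n, w j
        ≤ (2*(d:ℝ)*3^(d-1)) / (2*ν) * ((n:ℝ)^(-(2*ν)) - ((n:ℝ)+1)^(-(2*ν))) := by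
      rw [hshell]
      have hrp : (0:ℝ) ≤ (((n:ℝ)+1)) ^ (-(2*ν+(d:ℝ))) := Real.rpow_nonneg (by linarith) _
      calc (((2*(n+1)+1)^d - (2*n+1)^d : ℕ) : ℝ) * (((n:ℝ)+1)) ^ (-(2*ν+(d:ℝ)))
          ≤ (2*(d:ℝ)*3^(d-1)*((n:ℝ)+1)^(d-1)) * (((n:ℝ)+1)) ^ (-(2*ν+(d:ℝ))) :=
            mul_le_mul_of_nonneg_right hcard hrp
        _ = (2*(d:ℝ)*3^(d-1)) * (((n:ℝ)+1)^(d-1) * (((n:ℝ)+1)) ^ (-(2*ν+(d:ℝ)))) := by ring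
        _ = (2*(d:ℝ)*3^(d-1)) * ((n:ℝ)+1) ^ (-(2*ν+1)) := by rw [hmerge]
        _ ≤ (2*(d:ℝ)*3^(d-1)) / (2*ν) * ((n:ℝ)^(-(2*ν)) - ((n:ℝ)+1)^(-(2*ν))) := by
            have hC : (0:ℝ) ≤ 2*(d:ℝ)*3^(d-1) := by positivity
            have ht := tele_term hν hn1
            rw [div_mul_eq_mul_div, le_div_iff₀ (by linarith)]
            calc (2*(d:ℝ)*3^(d-1)) * ((n:ℝ)+1) ^ (-(2*ν+1)) * (2*ν)
                = (2*(d:ℝ)*3^(d-1)) * (2*ν * ((n:ℝ)+1) ^ (-(2*ν+1))) := by ring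
              _ ≤ (2*(d:ℝ)*3^(d-1)) * ((n:ℝ)^(-(2*ν)) - ((n:ℝ)+1)^(-(2*ν))) :=
                  mul_le_mul_of_nonneg_left ht hC
    have hNc : ((n+1:ℕ):ℝ) = (n:ℝ)+1 := by push_cast; ring
    rw [key, hNc]
    linarith [IH]

theorem stmt_5 (d : ℕ) (hd : d = 1 ∨ d = 2 ∨ d = 3) (ν : ℝ) (hν : 1 / 2 ≤ ν)
    (ℓ : ℝ) (hℓ0 : 0 < ℓ) (hℓ : ℓ ≤ (Real.log 2)⁻¹ * Real.sqrt (ν / (2 * d)))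
    (h : ℝ) (hh0 : 0 < h) (hh : h ≤ (1 + Real.sqrt (8 * ν) * ℓ)⁻¹)
    (ε : ℝ) (hε : 0 < ε) (m : ℕ)
    (hm : (m : ℝ) ≥ (d * 5 ^ (d - 1) / (Real.pi ^ ((d : ℝ) / 2) * ε)) ^ (1 / (2 * ν)) *
        (1.6 * Real.sqrt ν) / (Real.pi * h * ℓ)) :
    ∀ x : EuclideanSpace ℝ (Fin d),
      ‖(h : ℂ) ^ d * ∑' j : {j : Fin d → ℤ // j ∉ Jm d m},
          (Chat d ν ℓ (lpt d h j.1) : ℂ) *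
            Complex.exp (2 * (Real.pi : ℂ) * Complex.I * (h : ℂ) *
              ((∑ i, (j.1 i : ℝ) * x i : ℝ) : ℂ))‖ ≤ ε / 2 := by
  intro x
  have hd1 : 1 ≤ d := by rcases hd with rfl|rfl|rfl <;> norm_num
  have hν0 : (0:ℝ) < ν := by linarith
  have h2ν : (0:ℝ) < 2*ν := by linarith
  have hπ := Real.pi_pos
  have hγ1 : 0 < Real.Gamma (ν + (d : ℝ) / 2) := Real.Gamma_pos_of_pos (by positivity)
  have hγ2 : 0 < Real.Gamma ν := Real.Gamma_pos_of_pos hν0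
  have hd0 : (0:ℝ) < (d:ℝ) := by exact_mod_cast hd1
  set K0 : ℝ := (d * 5 ^ (d - 1) / (Real.pi ^ ((d : ℝ) / 2) * ε)) with hK0def
  have hK0 : 0 < K0 := by
    rw [hK0def]
    have : (0:ℝ) < Real.pi ^ ((d : ℝ) / 2) := Real.rpow_pos_of_pos hπ _
    positivity
  have hm' : K0 ^ (1/(2*ν)) * (1.6 * Real.sqrt ν) / (Real.pi * h * ℓ) ≤ (m:ℝ) := hm
  have hm1 : 1 ≤ m := by
    rcases Nat.eq_zero_or_pos m with rfl | hp
    · exfalso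
      have hr1 : (0:ℝ) < K0 ^ (1/(2*ν)) := Real.rpow_pos_of_pos hK0 _
      have hr2 : (0:ℝ) < Real.sqrt ν := Real.sqrt_pos.mpr hν0
      have h1 : 0 < K0 ^ (1/(2*ν)) * (1.6 * Real.sqrt ν) / (Real.pi * h * ℓ) := by positivity
      rw [Nat.cast_zero] at hm'
      linarith
    · exact hp
  have hm0 : (0:ℝ) < (m:ℝ) := by exact_mod_cast hm1
  set c1 : ℝ := (2 ^ d * Real.pi ^ ((d:ℝ)/2) * (2*ν)^ν *
      Real.Gamma (ν + (d:ℝ)/2) / Real.Gamma ν) * (ℓ / Real.sqrt (2*ν))^d with hc1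
  have hc1p : 0 ≤ c1 := by
    rw [hc1]
    have h1 : (0:ℝ) < Real.sqrt (2*ν) := Real.sqrt_pos.mpr h2ν
    positivity
  set T : ℝ := 2*Real.pi*ℓ*h with hTdef
  have hT0 : 0 < T := by rw [hTdef]; positivity
  -- pointwise bound
  have point : ∀ j : Fin d → ℤ, j ∉ Jm d m →
      Chat d ν ℓ (lpt d h j) ≤ c1 * (T ^ (-(2*ν+(d:ℝ))) * ((Ksup d j : ℝ)) ^ (-(2*ν+(d:ℝ)))) := by
    intro j hj
    have hK1 : 1 ≤ Ksup d j := by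
      have hc : ¬ Ksup d j ≤ m := fun hc => hj (mem_Jm_iff.2 hc)
      omega
    have hK0' : (0:ℝ) < (Ksup d j : ℝ) := by exact_mod_cast hK1
    have hTK0 : (0:ℝ) < T*(Ksup d j : ℝ) := by positivity
    have hNE : Nonempty (Fin d) := ⟨⟨0, by omega⟩⟩
    obtain ⟨i₀, -, hi₀⟩ := Finset.exists_mem_eq_sup Finset.univ Finset.univ_nonempty
      (fun i => (j i).natAbs)
    have hcoord : ∀ i, ‖lpt d h j i‖^2 = (h * ((j i : ℝ)))^2 := by
      intro i
      rw [Real.norm_eq_abs, sq_abs]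
      rfl
    have hnorm2 : ‖lpt d h j‖^2 = ∑ i, (h * ((j i : ℝ)))^2 := by
      rw [EuclideanSpace.norm_eq, Real.sq_sqrt (by positivity)]
      exact Finset.sum_congr rfl (fun i _ => hcoord i)
    have hsingle : (h * ((Ksup d j : ℝ)))^2 ≤ ‖lpt d h j‖^2 := by
      rw [hnorm2]
      have h1 : ((Ksup d j : ℝ)) = |((j i₀ : ℝ))| := by
        rw [Ksup, hi₀, Nat.cast_natAbs]
        push_cast
        ring
      calc (h * ((Ksup d j : ℝ)))^2 = (h * (j i₀ : ℝ))^2 := by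
            rw [h1, mul_pow, mul_pow, sq_abs]
        _ ≤ ∑ i, (h * ((j i : ℝ)))^2 :=
            Finset.single_le_sum (f := fun i => (h * ((j i : ℝ)))^2)
              (fun i _ => sq_nonneg _) (Finset.mem_univ i₀)
    have hbase : (T*(Ksup d j : ℝ))^2 ≤ 2*ν + (2*Real.pi*ℓ)^2 * ‖lpt d h j‖^2 := by
      rw [hTdef]
      nlinarith [hsingle, sq_nonneg (2*Real.pi*ℓ)]
    have hstep : (2*ν + (2*Real.pi*ℓ)^2 * ‖lpt d h j‖^2) ^ (-(ν+(d:ℝ)/2))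
        ≤ ((T*(Ksup d j : ℝ))^2) ^ (-(ν+(d:ℝ)/2)) := by
      apply Real.rpow_le_rpow_of_nonpos (by positivity) hbase
      have : (0:ℝ) ≤ (d:ℝ) := by positivity
      nlinarith
    have heq : ((T*(Ksup d j : ℝ))^2) ^ (-(ν+(d:ℝ)/2))
        = T ^ (-(2*ν+(d:ℝ))) * ((Ksup d j : ℝ)) ^ (-(2*ν+(d:ℝ))) := by
      rw [← Real.rpow_natCast (T*(Ksup d j : ℝ)) 2, ← Real.rpow_mul hTK0.le,
        show ((2:ℕ):ℝ) * (-(ν+(d:ℝ)/2)) = -(2*ν+(d:ℝ)) by push_cast; ring,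
        Real.mul_rpow hT0.le hK0'.le]
    rw [Chat, ← heq]
    exact mul_le_mul_of_nonneg_left hstep hc1p
  have hChat_nonneg : ∀ ξ : EuclideanSpace ℝ (Fin d), 0 ≤ Chat d ν ℓ ξ := by
    intro ξ
    rw [Chat]
    have h1 : (0:ℝ) < Real.sqrt (2*ν) := Real.sqrt_pos.mpr h2ν
    have h2 : (0:ℝ) < 2*ν + (2*Real.pi*ℓ)^2*‖ξ‖^2 := by positivity
    positivity
  -- partial sums bound
  set D : ℝ := c1 * T ^ (-(2*ν+(d:ℝ))) * ((2*(d:ℝ)*3^(d-1)) / (2*ν) * (m:ℝ)^(-(2*ν)))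
    with hD
  have partial_bd : ∀ F : Finset {j : Fin d → ℤ // j ∉ Jm d m},
      ∑ j ∈ F, Chat d ν ℓ (lpt d h j.1) ≤ D := by
    intro F
    have step1 : ∑ j ∈ F, Chat d ν ℓ (lpt d h j.1)
        ≤ ∑ j ∈ F, c1 * (T ^ (-(2*ν+(d:ℝ))) * ((Ksup d j.1 : ℝ)) ^ (-(2*ν+(d:ℝ)))) :=
      Finset.sum_le_sum (fun j _ => point j.1 j.2)
    have step2 : ∑ j ∈ F, ((Ksup d j.1:ℝ)) ^ (-(2*ν+(d:ℝ)))
        ≤ (2*(d:ℝ)*3^(d-1)) / (2*ν) * (m:ℝ)^(-(2*ν)) := by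
      set N := max m (F.sup fun j => Ksup d j.1) with hN
      have hmN : m ≤ N := le_max_left _ _
      have himg : (F.image Subtype.val) ⊆ Jm d N \ Jm d m := by
        intro j' hj'
        obtain ⟨j, hjF, rfl⟩ := Finset.mem_image.1 hj'
        refine Finset.mem_sdiff.2 ⟨mem_Jm_iff.2 ?_, j.2⟩
        exact le_trans (Finset.le_sup (f := fun j => Ksup d j.1) hjF) (le_max_right _ _)
      calc ∑ j ∈ F, ((Ksup d j.1:ℝ)) ^ (-(2*ν+(d:ℝ)))
          = ∑ j' ∈ F.image Subtype.val, ((Ksup d j':ℝ)) ^ (-(2*ν+(d:ℝ))) := by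
            rw [Finset.sum_image (fun a _ b _ hab => Subtype.val_injective hab)]
        _ ≤ ∑ j' ∈ Jm d N \ Jm d m, ((Ksup d j':ℝ)) ^ (-(2*ν+(d:ℝ))) :=
            Finset.sum_le_sum_of_subset_of_nonneg himg
              (fun _ _ _ => Real.rpow_nonneg (by positivity) _)
        _ ≤ (2*(d:ℝ)*3^(d-1)) / (2*ν) * ((m:ℝ)^(-(2*ν)) - (N:ℝ)^(-(2*ν))) :=
            tail_le hd hν hm1 N hmN
        _ ≤ (2*(d:ℝ)*3^(d-1)) / (2*ν) * (m:ℝ)^(-(2*ν)) := by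
            have hr1 : (0:ℝ) ≤ (N:ℝ)^(-(2*ν)) := Real.rpow_nonneg (by positivity) _
            have hr2 : (0:ℝ) ≤ (2*(d:ℝ)*3^(d-1)) / (2*ν) := by positivity
            nlinarith
    have hcT : (0:ℝ) ≤ c1 * T ^ (-(2*ν+(d:ℝ))) :=
      mul_nonneg hc1p (Real.rpow_nonneg hT0.le _)
    calc ∑ j ∈ F, Chat d ν ℓ (lpt d h j.1)
        ≤ ∑ j ∈ F, c1 * (T ^ (-(2*ν+(d:ℝ))) * ((Ksup d j.1 : ℝ)) ^ (-(2*ν+(d:ℝ)))) := step1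
      _ = (c1 * T ^ (-(2*ν+(d:ℝ)))) * ∑ j ∈ F, ((Ksup d j.1:ℝ)) ^ (-(2*ν+(d:ℝ))) := by
          rw [Finset.mul_sum]
          exact Finset.sum_congr rfl (fun j _ => by ring)
      _ ≤ (c1 * T ^ (-(2*ν+(d:ℝ)))) * ((2*(d:ℝ)*3^(d-1)) / (2*ν) * (m:ℝ)^(-(2*ν))) :=
          mul_le_mul_of_nonneg_left step2 hcT
      _ = D := by rw [hD]
  have hD0 : 0 ≤ D := le_trans (by simp) (partial_bd ∅)
  -- norms of terms
  set G : {j : Fin d → ℤ // j ∉ Jm d m} → ℂ := fun j =>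
    (Chat d ν ℓ (lpt d h j.1) : ℂ) *
      Complex.exp (2 * (Real.pi : ℂ) * Complex.I * (h : ℂ) *
        ((∑ i, (j.1 i : ℝ) * x i : ℝ) : ℂ)) with hG
  have hnormterm : ∀ j, ‖G j‖ = Chat d ν ℓ (lpt d h j.1) := by
    intro j
    rw [hG]
    simp only
    rw [norm_mul]
    rw [show (2 * (Real.pi : ℂ) * Complex.I * (h : ℂ) * ((∑ i, (j.1 i : ℝ) * x i : ℝ) : ℂ))
        = (((2 * Real.pi * h * (∑ i, (j.1 i : ℝ) * x i) : ℝ)) : ℂ) * Complex.I by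
      push_cast; ring]
    rw [Complex.norm_exp_ofReal_mul_I, mul_one, Complex.norm_real, Real.norm_eq_abs,
      abs_of_nonneg (hChat_nonneg _)]
  have hsummable : Summable (fun j => ‖G j‖) := by
    apply summable_of_sum_le (c := D)
    · intro j
      exact norm_nonneg _
    · intro u
      rw [Finset.sum_congr rfl (fun j _ => hnormterm j)]
      exact partial_bd u
  have htsum_le : ∑' j, ‖G j‖ ≤ D :=
    hsummable.tsum_le_of_sum_le (fun u => by
      rw [Finset.sum_congr rfl (fun j _ => hnormterm j)]
      exact partial_bd u)
  have hfinal : h^d * D ≤ ε/2 := by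
    have hsq : (0:ℝ) < Real.sqrt ν := Real.sqrt_pos.mpr hν0
    have hQ : (3.2:ℝ) * Real.sqrt ν * K0^(1/(2*ν)) ≤ T * m := by
      have h1 : K0 ^ (1/(2*ν)) * (1.6 * Real.sqrt ν) ≤ (m:ℝ) * (Real.pi * h * ℓ) := by
        rw [div_le_iff₀ (by positivity)] at hm'
        linarith
      calc (3.2:ℝ) * Real.sqrt ν * K0^(1/(2*ν))
          = 2*(K0^(1/(2*ν)) * (1.6 * Real.sqrt ν)) := by ring
        _ ≤ 2*((m:ℝ) * (Real.pi * h * ℓ)) := by linarith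
        _ = T * m := by rw [hTdef]; ring
    have hQpos : (0:ℝ) < 3.2 * Real.sqrt ν * K0^(1/(2*ν)) := by
      have := Real.rpow_pos_of_pos hK0 (1/(2*ν))
      positivity
    have hQb : (T*(m:ℝ))^(-(2*ν)) ≤ (3.2:ℝ)^(-(2*ν)) * ν^(-ν) * K0⁻¹ := by
      have e0 : (T*(m:ℝ))^(-(2*ν)) ≤ ((3.2:ℝ) * Real.sqrt ν * K0^(1/(2*ν)))^(-(2*ν)) :=
        Real.rpow_le_rpow_of_nonpos hQpos hQ (by linarith)
      have e1 : ((3.2:ℝ) * Real.sqrt ν * K0^(1/(2*ν)))^(-(2*ν))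
          = (3.2:ℝ)^(-(2*ν)) * (Real.sqrt ν)^(-(2*ν)) * (K0^(1/(2*ν)))^(-(2*ν)) := by
        rw [Real.mul_rpow (by positivity) (by positivity),
          Real.mul_rpow (by norm_num) hsq.le]
      have e2 : (Real.sqrt ν)^(-(2*ν)) = ν^(-ν) := by
        rw [Real.sqrt_eq_rpow, ← Real.rpow_mul hν0.le]
        congr 1
        ring
      have e3 : (K0^(1/(2*ν)))^(-(2*ν)) = K0⁻¹ := by
        rw [← Real.rpow_mul hK0.le,
          show (1/(2*ν)) * (-(2*ν)) = -1 by field_simp, Real.rpow_neg_one]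
      rw [e1, e2, e3] at e0
      exact e0
    have e4 : T ^ (-(2*ν+(d:ℝ))) = T^(-(2*ν)) * ((T^d : ℝ))⁻¹ := by
      rw [show -(2*ν+(d:ℝ)) = -(2*ν) + (-(d:ℝ)) by ring, Real.rpow_add hT0,
        Real.rpow_neg hT0.le (d:ℝ), Real.rpow_natCast T d]
    have e5 : T^(-(2*ν)) * (m:ℝ)^(-(2*ν)) = (T*(m:ℝ))^(-(2*ν)) :=
      (Real.mul_rpow hT0.le hm0.le).symm
    have hsplit : h^d * D = (h^d * c1 * ((T^d : ℝ))⁻¹ * ((2*(d:ℝ)*3^(d-1)) / (2*ν)))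
        * (T*(m:ℝ))^(-(2*ν)) := by
      rw [hD, e4, ← e5]; ring
    have hNN : 0 ≤ h^d * c1 * ((T^d:ℝ))⁻¹ * ((2*(d:ℝ)*3^(d-1)) / (2*ν)) := by
      have h1 : (0:ℝ) ≤ h^d := by positivity
      have h2 : (0:ℝ) ≤ ((T^d:ℝ))⁻¹ := inv_nonneg.2 (pow_nonneg hT0.le d)
      have h3 : (0:ℝ) ≤ (2*(d:ℝ)*3^(d-1)) / (2*ν) := div_nonneg (by positivity) h2ν.le
      exact mul_nonneg (mul_nonneg (mul_nonneg h1 hc1p) h2) h3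
    rw [hsplit]
    have hstep : (h^d * c1 * ((T^d : ℝ))⁻¹ * ((2*(d:ℝ)*3^(d-1)) / (2*ν))) * (T*(m:ℝ))^(-(2*ν))
        ≤ (h^d * c1 * ((T^d : ℝ))⁻¹ * ((2*(d:ℝ)*3^(d-1)) / (2*ν)))
          * ((3.2:ℝ)^(-(2*ν)) * ν^(-ν) * K0⁻¹) :=
      mul_le_mul_of_nonneg_left hQb hNN
    refine le_trans hstep ?_
    clear hstep hQ hQpos hQb e4 e5 hsplit hNN hD0 htsum_le hsummable hnormterm
    clear partial_bd point hChat_nonneg hm hm'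
    clear_value D G
    clear hD D hG G x hh hℓ
    -- atoms
    set s : ℝ := Real.sqrt (2*ν) with hsdef
    have hs0 : 0 < s := Real.sqrt_pos.mpr h2ν
    have hs2 : s^2 = 2*ν := Real.sq_sqrt h2ν.le
    have hs1 : 1 ≤ s := by
      rw [show (1:ℝ) = Real.sqrt 1 by rw [Real.sqrt_one], hsdef]
      exact Real.sqrt_le_sqrt (by linarith)
    set p : ℝ := Real.sqrt Real.pi with hpdef
    have hp0 : 0 < p := Real.sqrt_pos.mpr hπ
    have hp2 : p^2 = Real.pi := Real.sq_sqrt hπ.le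
    have hp177 : 1.772 ≤ p := by
      rw [show (1.772:ℝ) = Real.sqrt (1.772^2) by rw [Real.sqrt_sq (by norm_num)], hpdef]
      exact Real.sqrt_le_sqrt (by nlinarith [Real.pi_gt_d6])
    have hAb : ((25/128:ℝ))^ν ≤ 0.4421 := A_le hν
    have hA0 : (0:ℝ) < ((25/128:ℝ))^ν := Real.rpow_pos_of_pos (by norm_num) _
    have hAprod := A_prod hν0
    have hgG : Real.Gamma (ν+1/2) / Real.Gamma ν ≤ 2*ν/p := by
      have hgk : p * Real.Gamma (ν + 1/2) ≤ 2*(ν*Real.Gamma ν) := by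
        rw [hpdef]; exact gamma_key hν
      rw [div_le_div_iff₀ hγ2 hp0]
      nlinarith [hgk]
    have hgnn : 0 ≤ Real.Gamma (ν+1/2) / Real.Gamma ν :=
      div_nonneg (Real.Gamma_pos_of_pos (by linarith)).le hγ2.le
    have hεne : ε ≠ 0 := hε.ne'
    have hsne : s ≠ 0 := hs0.ne'
    have hpne : p ≠ 0 := hp0.ne'
    have hνne : ν ≠ 0 := hν0.ne'
    have hΓne : Real.Gamma ν ≠ 0 := hγ2.ne'
    have hℓne : ℓ ≠ 0 := hℓ0.ne'
    have hhne : h ≠ 0 := hh0.ne'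
    rcases hd with rfl | rfl | rfl
    · -- d = 1
      rw [hc1, hK0def, hTdef, rpow_half_pow hπ.le hpdef.symm 1,
        show ν + ((1:ℕ):ℝ)/2 = ν + 1/2 by push_cast; ring, ← hp2]
      calc _ = ε * (((2*ν)^ν * ν^(-ν) * (3.2:ℝ)^(-(2*ν)))
              * (Real.Gamma (ν+1/2) / Real.Gamma ν)) / (s*ν) := by
            push_cast
            field_simp
        _ = ε * (((25/128:ℝ))^ν * (Real.Gamma (ν+1/2) / Real.Gamma ν)) / (s*ν) := by
            rw [hAprod]
        _ ≤ ε * (((25/128:ℝ))^ν * (2*ν/p)) / (s*ν) := by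
            have hmono : ε * (((25/128:ℝ))^ν * (Real.Gamma (ν+1/2)/Real.Gamma ν))
                ≤ ε * (((25/128:ℝ))^ν * (2*ν/p)) :=
              mul_le_mul_of_nonneg_left (mul_le_mul_of_nonneg_left hgG hA0.le) hε.le
            exact (div_le_div_iff_of_pos_right (mul_pos hs0 hν0)).mpr hmono
        _ = 2*ε*((25/128:ℝ))^ν/(p*s) := by
            field_simp
        _ ≤ ε/2 := by
            rw [div_le_iff₀ (mul_pos hp0 hs0)]
            nlinarith [mul_le_mul hp177 hs1 zero_le_one (by linarith : (0:ℝ) ≤ p),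
              mul_le_mul_of_nonneg_left hAb hε.le]
    · -- d = 2
      rw [hc1, hK0def, hTdef, rpow_half_pow hπ.le hpdef.symm 2,
        show ν + ((2:ℕ):ℝ)/2 = ν + 1 by push_cast; ring,
        Real.Gamma_add_one hν0.ne', ← hp2]
      calc _ = ε * ((2*ν)^ν * ν^(-ν) * (3.2:ℝ)^(-(2*ν))) * (3/5) / (s^2) := by
            push_cast
            field_simp
        _ = ε * ((25/128:ℝ))^ν * (3/5) / (s^2) := by rw [hAprod]
        _ ≤ ε/2 := by
            rw [div_le_iff₀ (pow_pos hs0 2)]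
            have h1 : (1:ℝ)*1 ≤ s*s := mul_le_mul hs1 hs1 zero_le_one (by linarith)
            have h2 : ε*(1*1) ≤ ε*(s*s) := mul_le_mul_of_nonneg_left h1 hε.le
            have h3 : ε*((25/128:ℝ))^ν ≤ ε*0.4421 := mul_le_mul_of_nonneg_left hAb hε.le
            have h4 : s^2 = s*s := sq s
            rw [h4]
            nlinarith [h2, h3]
    · -- d = 3
      rw [hc1, hK0def, hTdef, rpow_half_pow hπ.le hpdef.symm 3,
        show ν + ((3:ℕ):ℝ)/2 = (ν + 1/2) + 1 by push_cast; ring,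
        Real.Gamma_add_one (by linarith : (0:ℝ) < ν + 1/2).ne', ← hp2]
      have hs3 : 2*ν ≤ s^3 := by nlinarith [hs1, hs2, hs0]
      calc _ = ε * (((2*ν)^ν * ν^(-ν) * (3.2:ℝ)^(-(2*ν)))
              * ((ν+1/2) * (Real.Gamma (ν+1/2) / Real.Gamma ν))) * (9/25) / (ν * s^3) := by
            push_cast
            field_simp
            ring
        _ = ε * (((25/128:ℝ))^ν * ((ν+1/2) * (Real.Gamma (ν+1/2) / Real.Gamma ν)))
              * (9/25) / (ν * s^3) := by rw [hAprod]
        _ ≤ ε * (((25/128:ℝ))^ν * ((2*ν) * (2*ν/p))) * (9/25) / (ν * s^3) := by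
            have hq : (ν+1/2) * (Real.Gamma (ν+1/2) / Real.Gamma ν) ≤ (2*ν) * (2*ν/p) :=
              mul_le_mul (by linarith) hgG hgnn (by linarith)
            have hmono : ε * (((25/128:ℝ))^ν * ((ν+1/2) * (Real.Gamma (ν+1/2) / Real.Gamma ν))) * (9/25)
                ≤ ε * (((25/128:ℝ))^ν * ((2*ν) * (2*ν/p))) * (9/25) :=
              mul_le_mul_of_nonneg_right
                (mul_le_mul_of_nonneg_left (mul_le_mul_of_nonneg_left hq hA0.le) hε.le)
                (by norm_num)
            exact (div_le_div_iff_of_pos_right (mul_pos hν0 (pow_pos hs0 3))).mpr hmono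
        _ = (ε * ((25/128:ℝ))^ν * (36/25)) * (ν / (p * s^3)) := by
            field_simp
            ring
        _ ≤ (ε * 0.4421 * (36/25)) * (1/(2*1.772)) := by
            apply mul_le_mul
            · have h3 : ε*((25/128:ℝ))^ν ≤ ε*0.4421 := mul_le_mul_of_nonneg_left hAb hε.le
              linarith
            · rw [div_le_div_iff₀ (mul_pos hp0 (pow_pos hs0 3)) (by norm_num)]
              have h5 : (1.772:ℝ)*(2*ν) ≤ p*s^3 :=
                mul_le_mul hp177 hs3 (by linarith) (by linarith)
              linarith
            · exact div_nonneg hν0.le (mul_pos hp0 (pow_pos hs0 3)).le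
            · exact mul_nonneg (mul_nonneg hε.le (by norm_num)) (by norm_num)
        _ ≤ ε/2 := by linarith [hε.le]
  calc ‖(h : ℂ) ^ d * ∑' j, G j‖ = h^d * ‖∑' j, G j‖ := by
        rw [norm_mul, norm_pow, Complex.norm_real, Real.norm_eq_abs, abs_of_pos hh0]
    _ ≤ h^d * D := by
        have h1 : ‖∑' j, G j‖ ≤ D := le_trans (norm_tsum_le_tsum_norm hsummable) htsum_le
        exact mul_le_mul_of_nonneg_left h1 (by positivity)
    _ ≤ ε/2 := hfinal
end

section
/- Let y ∈ ℝ^N, let K and K̃ be N×N real symmetric positive semidefinite matrices, let σ > 0, and let α, α̃ ∈ ℝ^N be the unique solutions of (K + σ²I)α = y and (K̃ + σ²I)α̃ = y. Let k_x, k̃_x ∈ ℝ^N be any two vectors, and set μ(x) = k_xᵀ α and μ̃(x) = k̃_xᵀ α̃. Then |μ̃(x) − μ(x)| ≤ ( (‖k_x‖/σ⁴) ‖K̃ − K‖ + ‖k̃_x − k_x‖/σ² ) · ‖y‖, where ‖·‖ denotes the Euclidean norm for vectors and the operator (spectral) norm for matrices. -/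
/-- Operator (spectral) norm of a real square matrix, induced by the Euclidean norm. -/
noncomputable def opNorm {N : ℕ} (A : Matrix (Fin N) (Fin N) ℝ) : ℝ :=
  ‖Matrix.toEuclideanCLM (𝕜 := ℝ) A‖

/-- Euclidean norm of a vector in `ℝ^N`. -/
noncomputable def vecNorm {N : ℕ} (v : Fin N → ℝ) : ℝ :=
  Real.sqrt (∑ i, v i ^ 2)

lemma vecNorm_eq {N : ℕ} (v : Fin N → ℝ) :
    vecNorm v = ‖(WithLp.equiv 2 (Fin N → ℝ)).symm v‖ := by
  rw [EuclideanSpace.norm_eq, vecNorm]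
  congr 1
  refine Finset.sum_congr rfl fun i _ => ?_
  simp [Real.norm_eq_abs, sq_abs]

lemma vecNorm_nonneg {N : ℕ} (v : Fin N → ℝ) : 0 ≤ vecNorm v :=
  Real.sqrt_nonneg _

lemma abs_dot_le {N : ℕ} (x y : Fin N → ℝ) :
    |dotProduct x y| ≤ vecNorm x * vecNorm y := by
  rw [vecNorm_eq, vecNorm_eq]
  have h := abs_real_inner_le_norm ((WithLp.equiv 2 (Fin N → ℝ)).symm x)
    ((WithLp.equiv 2 (Fin N → ℝ)).symm y)
  have : (inner ℝ ((WithLp.equiv 2 (Fin N → ℝ)).symm x) ((WithLp.equiv 2 (Fin N → ℝ)).symm y) : ℝ)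
      = dotProduct x y := by
    rw [PiLp.inner_apply]
    simp [dotProduct, mul_comm]
  rwa [this] at h

lemma vecNorm_mulVec_le {N : ℕ} (A : Matrix (Fin N) (Fin N) ℝ) (v : Fin N → ℝ) :
    vecNorm (A.mulVec v) ≤ opNorm A * vecNorm v := by
  rw [vecNorm_eq, vecNorm_eq, opNorm]
  have := (Matrix.toEuclideanCLM (𝕜 := ℝ) A).le_opNorm ((WithLp.equiv 2 (Fin N → ℝ)).symm v)
  exact this

lemma key {N : ℕ} (K : Matrix (Fin N) (Fin N) ℝ) (hK : K.PosSemidef) (σ : ℝ) (hσ : 0 < σ)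
    (u : Fin N → ℝ) :
    σ ^ 2 * vecNorm u ≤ vecNorm ((K + σ ^ 2 • 1).mulVec u) := by
  have h1 : σ ^ 2 * (vecNorm u) ^ 2 ≤ dotProduct u ((K + σ ^ 2 • 1).mulVec u) := by
    have hsum : (vecNorm u) ^ 2 = ∑ i, u i ^ 2 := by
      rw [vecNorm, Real.sq_sqrt (Finset.sum_nonneg fun i _ => sq_nonneg _)]
    have hpsd := hK.dotProduct_mulVec_nonneg u
    simp only [star_trivial] at hpsd
    have : dotProduct u ((K + σ ^ 2 • 1).mulVec u)
        = dotProduct u (K.mulVec u) + σ ^ 2 * ∑ i, u i ^ 2 := by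
      rw [Matrix.add_mulVec, dotProduct_add, Matrix.smul_mulVec,
        Matrix.one_mulVec, dotProduct_smul]
      simp [dotProduct, sq, smul_eq_mul, Finset.mul_sum]
    rw [this, hsum]
    linarith
  have h2 : dotProduct u ((K + σ ^ 2 • 1).mulVec u)
      ≤ vecNorm u * vecNorm ((K + σ ^ 2 • 1).mulVec u) := by
    calc dotProduct u ((K + σ ^ 2 • 1).mulVec u)
        ≤ |dotProduct u ((K + σ ^ 2 • 1).mulVec u)| := le_abs_self _
      _ ≤ _ := abs_dot_le _ _
  rcases eq_or_lt_of_le (vecNorm_nonneg u) with h0 | h0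
  · rw [← h0, mul_zero]
    exact vecNorm_nonneg _
  · have := h1.trans h2
    rw [sq (vecNorm u)] at this
    nlinarith

theorem stmt_11 (N : ℕ) (y : Fin N → ℝ) (K Ktil : Matrix (Fin N) (Fin N) ℝ)
    (hK : K.PosSemidef) (hKt : Ktil.PosSemidef) (σ : ℝ) (hσ : 0 < σ)
    (α αt : Fin N → ℝ)
    (hα : (K + σ ^ 2 • 1).mulVec α = y) (hαt : (Ktil + σ ^ 2 • 1).mulVec αt = y)
    (kx ktx : Fin N → ℝ) :
    |dotProduct ktx αt - dotProduct kx α|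
      ≤ (vecNorm kx / σ ^ 4 * opNorm (Ktil - K) + vecNorm (ktx - kx) / σ ^ 2) * vecNorm y := by
  have hσ2 : (0:ℝ) < σ ^ 2 := by positivity
  -- bounds on α, αt
  have hαb : vecNorm α ≤ vecNorm y / σ ^ 2 := by
    have := key K hK σ hσ α
    rw [hα] at this
    rw [le_div_iff₀ hσ2]
    linarith
  have hαtb : vecNorm αt ≤ vecNorm y / σ ^ 2 := by
    have := key Ktil hKt σ hσ αt
    rw [hαt] at this
    rw [le_div_iff₀ hσ2]
    linarith
  -- difference bound
  have hdiff : (Ktil + σ ^ 2 • 1).mulVec (αt - α) = (K - Ktil).mulVec α := by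
    rw [Matrix.mulVec_sub, hαt, ← hα, ← Matrix.sub_mulVec]
    congr 1
    abel
  have hdiffb : vecNorm (αt - α) ≤ opNorm (Ktil - K) * vecNorm y / σ ^ 4 := by
    have h1 := key Ktil hKt σ hσ (αt - α)
    rw [hdiff] at h1
    have h2 : vecNorm ((K - Ktil).mulVec α) ≤ opNorm (Ktil - K) * vecNorm α := by
      have := vecNorm_mulVec_le (K - Ktil) α
      have hop : opNorm (K - Ktil) = opNorm (Ktil - K) := by
        rw [opNorm, opNorm, (neg_sub Ktil K).symm, map_neg, norm_neg]
      rwa [hop] at this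
    have h3 : opNorm (Ktil - K) * vecNorm α ≤ opNorm (Ktil - K) * (vecNorm y / σ ^ 2) :=
      mul_le_mul_of_nonneg_left hαb (norm_nonneg _)
    rw [le_div_iff₀ (by positivity : (0:ℝ) < σ ^ 4)]
    have h4 : σ ^ 2 * vecNorm (αt - α) ≤ opNorm (Ktil - K) * (vecNorm y / σ ^ 2) :=
      h1.trans (h2.trans h3)
    have : σ ^ 4 = σ ^ 2 * σ ^ 2 := by ring
    rw [this]
    calc vecNorm (αt - α) * (σ ^ 2 * σ ^ 2)
        = (σ ^ 2 * vecNorm (αt - α)) * σ ^ 2 := by ring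
      _ ≤ (opNorm (Ktil - K) * (vecNorm y / σ ^ 2)) * σ ^ 2 :=
          mul_le_mul_of_nonneg_right h4 hσ2.le
      _ = opNorm (Ktil - K) * vecNorm y := by field_simp
  -- split
  have hsplit : dotProduct ktx αt - dotProduct kx α
      = dotProduct (ktx - kx) αt + dotProduct kx (αt - α) := by
    simp [sub_dotProduct, dotProduct_sub]
  rw [hsplit]
  have t1 : |dotProduct (ktx - kx) αt| ≤ vecNorm (ktx - kx) * (vecNorm y / σ ^ 2) :=
    (abs_dot_le _ _).trans (mul_le_mul_of_nonneg_left hαtb (vecNorm_nonneg _))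
  have t2 : |dotProduct kx (αt - α)|
      ≤ vecNorm kx * (opNorm (Ktil - K) * vecNorm y / σ ^ 4) :=
    (abs_dot_le _ _).trans (mul_le_mul_of_nonneg_left hdiffb (vecNorm_nonneg _))
  calc |dotProduct (ktx - kx) αt + dotProduct kx (αt - α)|
      ≤ |dotProduct (ktx - kx) αt| + |dotProduct kx (αt - α)| := abs_add_le _ _
    _ ≤ vecNorm (ktx - kx) * (vecNorm y / σ ^ 2)
        + vecNorm kx * (opNorm (Ktil - K) * vecNorm y / σ ^ 4) := add_le_add t1 t2
    _ = (vecNorm kx / σ ^ 4 * opNorm (Ktil - K) + vecNorm (ktx - kx) / σ ^ 2) * vecNorm y := by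
        ring
end
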